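/- Let β ≥ 0 and δ, σ > 0 satisfy δ > (1 − 4β)e^{−2} (this holds in particular whenever β ≥ 1/4). Then there is exactly one y > 0 with σ − δy = y·e^{−y/(1+βy)}; i.e., the equilibrium of the CSTR model is unique. -/

import Mathlib

open Real

lemma key_t (β δ t : ℝ) (hβ : 0 ≤ β) (hδ : 0 < δ)
    (h : δ > (1 - 4 * β) * Real.exp (-2)) :
    0 < δ + Real.exp (-t) * (1 - t + β * t ^ 2) := by
  rcases le_or_gt (1/4 : ℝ) β with hb | hb
  · have he := Real.exp_pos (-t)
    nlinarith [sq_nonneg (t - 2), sq_nonneg t, mul_nonneg (sub_nonneg.2 hb) (sq_nonneg t)]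
  · have hX : Real.exp (-t) * Real.exp (t - 2) = Real.exp (-2) := by
      rw [← Real.exp_add]; ring_nf
    have hXge : t - 1 ≤ Real.exp (t - 2) := by
      nlinarith [Real.add_one_le_exp (t - 2)]
    have hE := Real.exp_pos (-t)
    have hXpos := Real.exp_pos (t - 2)
    nlinarith [mul_nonneg hβ (sq_nonneg (t - 2)),
      mul_le_mul_of_nonneg_left hXge (le_of_lt hE),
      mul_pos hE hXpos,
      mul_le_mul_of_nonneg_right hXge (mul_nonneg hE.le (by linarith : (0:ℝ) ≤ 1 - 4*β))]

lemma cstr_hasDerivAt (β δ y : ℝ) (hc : (1 : ℝ) + β * y ≠ 0) :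
    HasDerivAt (fun y => δ * y + y * Real.exp (-(y / (1 + β * y))))
      (δ + Real.exp (-(y / (1 + β * y))) * (1 - y / (1 + β * y) ^ 2)) y := by
  have h1 : HasDerivAt (fun y : ℝ => y / (1 + β * y)) (1 / (1 + β * y) ^ 2) y := by
    have := (hasDerivAt_id y).div
      ((hasDerivAt_const y (1:ℝ)).add ((hasDerivAt_id y).const_mul β)) hc
    refine this.congr_deriv ?_
    simp only [Pi.add_apply, id_eq]
    field_simp
    ring
  have h2 : HasDerivAt (fun y : ℝ => Real.exp (-(y / (1 + β * y))))
      (Real.exp (-(y / (1 + β * y))) * (-(1 / (1 + β * y) ^ 2))) y := h1.neg.exp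
  have h3 := (hasDerivAt_id y).mul h2
  have h4 := ((hasDerivAt_id y).const_mul δ).add h3
  refine h4.congr_deriv ?_
  have : y / (1 + β * y) ^ 2 = y * (1 / (1 + β * y) ^ 2) := by ring
  rw [this]
  simp only [id_eq]
  ring

lemma deriv_pos (β δ y : ℝ) (hβ : 0 ≤ β) (hδ : 0 < δ)
    (h : δ > (1 - 4 * β) * Real.exp (-2)) (hy : 0 ≤ y) :
    0 < δ + Real.exp (-(y / (1 + β * y))) * (1 - y / (1 + β * y) ^ 2) := by
  have hcpos : (0 : ℝ) < 1 + β * y := by positivity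
  set t := y / (1 + β * y) with htdef
  have hrw : 1 - y / (1 + β * y) ^ 2 = 1 - t + β * t ^ 2 := by
    rw [htdef]
    field_simp
    ring
  rw [hrw]
  exact key_t β δ t hβ hδ h

/-- If `β ≥ 0`, `δ, σ > 0` and `δ > (1 − 4β)e^{−2}`, then there is exactly one
`y > 0` with `σ − δy = y·exp(−y/(1+βy))`, i.e., the CSTR equilibrium is unique. -/
theorem stmt_2 (β δ σ : ℝ) (hβ : 0 ≤ β) (hδ : 0 < δ) (hσ : 0 < σ)
    (h : δ > (1 - 4 * β) * Real.exp (-2)) :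
    ∃! y : ℝ, 0 < y ∧ σ - δ * y = y * Real.exp (-(y / (1 + β * y))) := by
  set g : ℝ → ℝ := fun y => δ * y + y * Real.exp (-(y / (1 + β * y))) with hg
  have hne : ∀ y : ℝ, 0 ≤ y → (1 : ℝ) + β * y ≠ 0 := fun y hy => by positivity
  have hder : ∀ y ∈ Set.Ici (0:ℝ), HasDerivAt g
      (δ + Real.exp (-(y / (1 + β * y))) * (1 - y / (1 + β * y) ^ 2)) y :=
    fun y hy => cstr_hasDerivAt β δ y (hne y hy)
  have hcont : ContinuousOn g (Set.Ici 0) :=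
    fun y hy => (hder y hy).continuousAt.continuousWithinAt
  have hmono : StrictMonoOn g (Set.Ici 0) := by
    apply strictMonoOn_of_deriv_pos (convex_Ici 0) hcont
    intro y hy
    rw [interior_Ici] at hy
    rw [(hder y (Set.mem_Ici.2 (le_of_lt hy))).deriv]
    exact deriv_pos β δ y hβ hδ h (le_of_lt hy)
  have hg0 : g 0 = 0 := by simp [hg]
  set b : ℝ := (σ + 1) / δ with hb
  have hbpos : 0 < b := by positivity
  have hgb : σ < g b := by
    have h1 : δ * b = σ + 1 := by rw [hb]; field_simp
    have h2 : 0 ≤ b * Real.exp (-(b / (1 + β * b))) := by positivity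
    show σ < δ * b + b * Real.exp (-(b / (1 + β * b)))
    nlinarith
  have hivt : σ ∈ Set.Icc (g 0) (g b) := ⟨by rw [hg0]; exact hσ.le, hgb.le⟩
  obtain ⟨y, hymem, hgy⟩ := intermediate_value_Icc hbpos.le
    (hcont.mono (Set.Icc_subset_Ici_self)) hivt
  have hy0 : 0 < y := by
    rcases lt_or_eq_of_le hymem.1 with h' | h'
    · exact h'
    · exfalso; rw [← h', hg0] at hgy; linarith
  have hgy' : δ * y + y * Real.exp (-(y / (1 + β * y))) = σ := hgy
  refine ⟨y, ⟨hy0, by linarith⟩, ?_⟩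
  rintro z ⟨hz0, hz⟩
  have hgz : g z = σ := by show δ * z + z * Real.exp (-(z / (1 + β * z))) = σ; linarith
  exact hmono.injOn (Set.mem_Ici.2 hz0.le) (Set.mem_Ici.2 hy0.le) (by rw [hgz, hgy])
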